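/- Let H be an infinite-dimensional complex Hilbert space, let p and q be projections on H such that p − q is a compact operator, and let W and V be isometries with W W* = p and V V* = q. Then the kernels of V*W, W*V, p − q − 1 and p − q + 1 are all finite-dimensional and dim ker(V*W) − dim ker(W*V) = dim ker(p − q − 1) − dim ker(p − q + 1). (The essential codimension [p:q] = Ind(V*W) equals dim E₁(p−q) − dim E₋₁(p−q), where E_λ(p−q) denotes the eigenspace of p − q for the eigenvalue λ.) -/

import Mathlib

open ContinuousLinearMap Module

/-- A projection on a Hilbert space: a self-adjoint idempotent bounded operator. -/
def IsProjection {H : Type*} [NormedAddCommGroup H] [InnerProductSpace ℂ H]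
    [CompleteSpace H] (p : H →L[ℂ] H) : Prop :=
  IsSelfAdjoint p ∧ p * p = p

section aux

variable {H : Type*} [NormedAddCommGroup H] [InnerProductSpace ℂ H] [CompleteSpace H]

local notation "⟪" x ", " y "⟫" => @inner ℂ _ _ x y

/-- Eigenspaces of compact operators at eigenvalue 1 are finite-dimensional (Riesz). -/
lemma fd_ker_sub_one (T : H →L[ℂ] H) (hT : IsCompactOperator (⇑T)) :
    FiniteDimensional ℂ (LinearMap.ker ((T - 1 : H →L[ℂ] H) : H →ₗ[ℂ] H)) := by
  set K : Submodule ℂ H := LinearMap.ker ((T - 1 : H →L[ℂ] H) : H →ₗ[ℂ] H) with hK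
  have hfix : ∀ x ∈ K, T x = x := by
    intro x hx
    have : (T - 1) x = 0 := hx
    simpa [sub_eq_zero] using this
  obtain ⟨C, hCcomp, hCsub⟩ :=
    (hT : IsCompactOperator (⇑(T : H →ₗ[ℂ] H))).image_closedBall_subset_compact 1
  have hSeq : (Subtype.val '' Metric.closedBall (0 : K) 1) =
      (K : Set H) ∩ Metric.closedBall (0 : H) 1 := by
    ext x
    constructor
    · rintro ⟨⟨y, hy⟩, hball, rfl⟩
      refine ⟨hy, ?_⟩
      simpa [Metric.mem_closedBall, dist_zero_right] using hball
    · rintro ⟨hx, hball⟩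
      exact ⟨⟨x, hx⟩, by simpa [Metric.mem_closedBall, dist_zero_right] using hball, rfl⟩
  have hclosed : IsClosed ((K : Set H) ∩ Metric.closedBall (0 : H) 1) :=
    (isClosed_ker (T - 1)).inter Metric.isClosed_closedBall
  have hsub : (K : Set H) ∩ Metric.closedBall (0 : H) 1 ⊆ C := by
    rintro x ⟨hx, hball⟩
    have : x ∈ (T : H →ₗ[ℂ] H) '' Metric.closedBall 0 1 := ⟨x, hball, hfix x hx⟩
    exact hCsub this
  have hScomp : IsCompact ((K : Set H) ∩ Metric.closedBall (0 : H) 1) :=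
    hCcomp.of_isClosed_subset hclosed hsub
  have : IsCompact (Metric.closedBall (0 : K) 1) := by
    rw [Topology.IsEmbedding.subtypeVal.isCompact_iff, hSeq]
    exact hScomp
  exact FiniteDimensional.of_isCompact_closedBall₀ ℂ one_pos this

/-- Characterization of the eigenspace at 1 of a difference of projections. -/
lemma mem_ker_char (p q : H →L[ℂ] H) (hp : IsProjection p) (hq : IsProjection q) (x : H) :
    x ∈ LinearMap.ker ((p - q - 1 : H →L[ℂ] H) : H →ₗ[ℂ] H) ↔ p x = x ∧ q x = 0 := by
  have hpadj : adjoint p = p := by rw [← ContinuousLinearMap.star_eq_adjoint]; exact hp.1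
  have hqadj : adjoint q = q := by rw [← ContinuousLinearMap.star_eq_adjoint]; exact hq.1
  have hpp : p (p x) = p x := by
    have := congrArg (fun A : H →L[ℂ] H => A x) hp.2
    simpa [mul_apply] using this
  have hqq : q (q x) = q x := by
    have := congrArg (fun A : H →L[ℂ] H => A x) hq.2
    simpa [mul_apply] using this
  constructor
  · intro hx
    have hxeq : p x - q x = x := by
      have h0 : (p - q - 1) x = 0 := hx
      have h2 : p x - q x - x = 0 := by simpa [sub_apply] using h0
      exact sub_eq_zero.mp h2
    have h1 : ⟪p x, x⟫ = ((‖p x‖ : ℂ)) ^ 2 := by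
      calc ⟪p x, x⟫ = ⟪p (p x), x⟫ := by rw [hpp]
        _ = ⟪p x, adjoint p x⟫ := (ContinuousLinearMap.adjoint_inner_right p (p x) x).symm
        _ = ⟪p x, p x⟫ := by rw [hpadj]
        _ = ((‖p x‖ : ℂ)) ^ 2 := inner_self_eq_norm_sq_to_K (p x)
    have h2 : ⟪q x, x⟫ = ((‖q x‖ : ℂ)) ^ 2 := by
      calc ⟪q x, x⟫ = ⟪q (q x), x⟫ := by rw [hqq]
        _ = ⟪q x, adjoint q x⟫ := (ContinuousLinearMap.adjoint_inner_right q (q x) x).symm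
        _ = ⟪q x, q x⟫ := by rw [hqadj]
        _ = ((‖q x‖ : ℂ)) ^ 2 := inner_self_eq_norm_sq_to_K (q x)
    have h3 : ((‖p x‖ : ℂ)) ^ 2 - ((‖q x‖ : ℂ)) ^ 2 = ((‖x‖ : ℂ)) ^ 2 := by
      calc ((‖p x‖ : ℂ)) ^ 2 - ((‖q x‖ : ℂ)) ^ 2 = ⟪p x, x⟫ - ⟪q x, x⟫ := by rw [h1, h2]
        _ = ⟪p x - q x, x⟫ := (inner_sub_left _ _ _).symm
        _ = ⟪x, x⟫ := by rw [hxeq]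
        _ = ((‖x‖ : ℂ)) ^ 2 := inner_self_eq_norm_sq_to_K x
    have hr : ‖p x‖ ^ 2 - ‖q x‖ ^ 2 = ‖x‖ ^ 2 := by exact_mod_cast h3
    have hcs : ‖p x‖ ^ 2 ≤ ‖p x‖ * ‖x‖ := by
      have hn : ‖⟪p x, x⟫‖ = ‖p x‖ ^ 2 := by
        rw [h1]
        simp [norm_pow, abs_of_nonneg (norm_nonneg (p x))]
      calc ‖p x‖ ^ 2 = ‖⟪p x, x⟫‖ := hn.symm
        _ ≤ ‖p x‖ * ‖x‖ := norm_inner_le_norm _ _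
    have hb2 : ‖q x‖ ^ 2 ≤ 0 := by
      nlinarith [norm_nonneg (p x), norm_nonneg x, sq_nonneg (‖p x‖ - ‖x‖)]
    have hq0 : q x = 0 := by
      have : ‖q x‖ = 0 :=
        le_antisymm (by nlinarith [norm_nonneg (q x)]) (norm_nonneg _)
      exact norm_eq_zero.mp this
    refine ⟨?_, hq0⟩
    have := hxeq
    rw [hq0, sub_zero] at this
    exact this
  · rintro ⟨hpx, hqx⟩
    show (p - q - 1) x = 0
    simp [sub_apply, hpx, hqx]

/-- `W` restricts to a linear equivalence `ker (V* W) ≃ ker (p − q − 1)`. -/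
lemma ker_equiv (p q W V : H →L[ℂ] H) (hp : IsProjection p) (hq : IsProjection q)
    (hW : adjoint W * W = 1) (hWp : W * adjoint W = p)
    (hV : adjoint V * V = 1) (hVq : V * adjoint V = q) :
    Nonempty ((LinearMap.ker ((adjoint V * W : H →L[ℂ] H) : H →ₗ[ℂ] H)) ≃ₗ[ℂ] (LinearMap.ker ((p - q - 1 : H →L[ℂ] H) : H →ₗ[ℂ] H))) := by
  have hWW : ∀ x, adjoint W (W x) = x := by
    intro x
    have := congrArg (fun A : H →L[ℂ] H => A x) hW
    simpa [mul_apply] using this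
  have hpW : ∀ x, p (W x) = W x := by
    intro x
    have h : p * W = W := by rw [← hWp, mul_assoc, hW, mul_one]
    have := congrArg (fun A : H →L[ℂ] H => A x) h
    simpa [mul_apply] using this
  have hVq' : ∀ y, adjoint V (q y) = adjoint V y := by
    intro y
    have h : adjoint V * q = adjoint V := by rw [← hVq, ← mul_assoc, hV, one_mul]
    have := congrArg (fun A : H →L[ℂ] H => A y) h
    simpa [mul_apply] using this
  have mem_target : ∀ x : LinearMap.ker ((adjoint V * W : H →L[ℂ] H) : H →ₗ[ℂ] H),
      W (x : H) ∈ LinearMap.ker ((p - q - 1 : H →L[ℂ] H) : H →ₗ[ℂ] H) := by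
    rintro ⟨x, hx⟩
    have hVWx : adjoint V (W x) = 0 := by simpa [mul_apply] using hx
    have hqWx : q (W x) = 0 := by
      have h : q * W = V * (adjoint V * W) := by rw [← hVq, mul_assoc]
      have h2 := congrArg (fun A : H →L[ℂ] H => A x) h
      change q (W x) = V (adjoint V (W x)) at h2
      rw [h2, hVWx, map_zero]
    exact (mem_ker_char p q hp hq (W x)).mpr ⟨hpW x, hqWx⟩
  let f : (LinearMap.ker ((adjoint V * W : H →L[ℂ] H) : H →ₗ[ℂ] H)) →ₗ[ℂ] (LinearMap.ker ((p - q - 1 : H →L[ℂ] H) : H →ₗ[ℂ] H)) :=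
    { toFun := fun x => ⟨W (x : H), mem_target x⟩
      map_add' := fun a b => Subtype.ext (map_add W (a : H) b)
      map_smul' := fun c a => Subtype.ext (map_smul W c (a : H)) }
  have hinj : Function.Injective f := by
    intro a b hab
    have h1 : W (a : H) = W (b : H) := congrArg Subtype.val hab
    have : (a : H) = (b : H) := by
      rw [← hWW (a : H), ← hWW (b : H), h1]
    exact Subtype.ext this
  have hsurj : Function.Surjective f := by
    rintro ⟨y, hy⟩
    obtain ⟨hpy, hqy⟩ := (mem_ker_char p q hp hq y).mp hy
    have hWy : W (adjoint W y) = y := by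
      have := congrArg (fun A : H →L[ℂ] H => A y) hWp
      change W (adjoint W y) = p y at this
      rw [this, hpy]
    have hmem : adjoint W y ∈ LinearMap.ker ((adjoint V * W : H →L[ℂ] H) : H →ₗ[ℂ] H) := by
      show (adjoint V * W) (adjoint W y) = 0
      have : adjoint V (W (adjoint W y)) = 0 := by
        rw [hWy, ← hVq' y, hqy, map_zero]
      simpa [mul_apply] using this
    exact ⟨⟨adjoint W y, hmem⟩, Subtype.ext hWy⟩
  exact ⟨LinearEquiv.ofBijective f ⟨hinj, hsurj⟩⟩

end aux

/-- The essential codimension `[p:q] = Ind(V* W)` equals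
`dim E₁(p − q) − dim E₋₁(p − q)`. -/
theorem essCodim_eq_eigenspace_dims {H : Type*} [NormedAddCommGroup H]
    [InnerProductSpace ℂ H] [CompleteSpace H] (hinf : ¬ FiniteDimensional ℂ H)
    (p q W V : H →L[ℂ] H)
    (hp : IsProjection p) (hq : IsProjection q)
    (hpq : IsCompactOperator (⇑(p - q)))
    (hW : adjoint W * W = 1) (hWp : W * adjoint W = p)
    (hV : adjoint V * V = 1) (hVq : V * adjoint V = q) :
    FiniteDimensional ℂ (LinearMap.ker ((adjoint V * W : H →L[ℂ] H) : H →ₗ[ℂ] H)) ∧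
    FiniteDimensional ℂ (LinearMap.ker ((adjoint W * V : H →L[ℂ] H) : H →ₗ[ℂ] H)) ∧
    FiniteDimensional ℂ (LinearMap.ker ((p - q - 1 : H →L[ℂ] H) : H →ₗ[ℂ] H)) ∧
    FiniteDimensional ℂ (LinearMap.ker ((p - q + 1 : H →L[ℂ] H) : H →ₗ[ℂ] H)) ∧
    (finrank ℂ (LinearMap.ker ((adjoint V * W : H →L[ℂ] H) : H →ₗ[ℂ] H)) : ℤ) -
      (finrank ℂ (LinearMap.ker ((adjoint W * V : H →L[ℂ] H) : H →ₗ[ℂ] H)) : ℤ) =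
    (finrank ℂ (LinearMap.ker ((p - q - 1 : H →L[ℂ] H) : H →ₗ[ℂ] H)) : ℤ) -
      (finrank ℂ (LinearMap.ker ((p - q + 1 : H →L[ℂ] H) : H →ₗ[ℂ] H)) : ℤ) := by
  obtain ⟨e₁⟩ := ker_equiv p q W V hp hq hW hWp hV hVq
  obtain ⟨e₂⟩ := ker_equiv q p V W hq hp hV hVq hW hWp
  have hker : LinearMap.ker ((p - q + 1 : H →L[ℂ] H) : H →ₗ[ℂ] H) = LinearMap.ker ((q - p - 1 : H →L[ℂ] H) : H →ₗ[ℂ] H) := by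
    have key : ∀ x : H, (q - p - 1) x = -((p - q + 1) x) := by
      intro x
      simp only [sub_apply, add_apply, one_apply]
      abel
    ext x
    simp only [LinearMap.mem_ker, ContinuousLinearMap.coe_coe]
    constructor
    · intro h
      rw [key, h, neg_zero]
    · intro h
      have := key x
      rw [h] at this
      exact (neg_eq_zero.mp this.symm)
  have hqp : IsCompactOperator (⇑(q - p)) := by
    have hcoe : ⇑(q - p) = -(⇑(p - q)) := by
      funext x
      show q x - p x = -(p x - q x)
      abel
    rw [hcoe]
    exact hpq.neg
  have fd₃ : FiniteDimensional ℂ (LinearMap.ker ((p - q - 1 : H →L[ℂ] H) : H →ₗ[ℂ] H)) := fd_ker_sub_one (p - q) hpq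
  have fd₄' : FiniteDimensional ℂ (LinearMap.ker ((q - p - 1 : H →L[ℂ] H) : H →ₗ[ℂ] H)) := fd_ker_sub_one (q - p) hqp
  have fd₄ : FiniteDimensional ℂ (LinearMap.ker ((p - q + 1 : H →L[ℂ] H) : H →ₗ[ℂ] H)) := by rw [hker]; exact fd₄'
  have fd₁ : FiniteDimensional ℂ (LinearMap.ker ((adjoint V * W : H →L[ℂ] H) : H →ₗ[ℂ] H)) :=
    Module.Finite.equiv e₁.symm
  have fd₂ : FiniteDimensional ℂ (LinearMap.ker ((adjoint W * V : H →L[ℂ] H) : H →ₗ[ℂ] H)) :=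
    Module.Finite.equiv e₂.symm
  refine ⟨fd₁, fd₂, fd₃, fd₄, ?_⟩
  rw [e₁.finrank_eq, e₂.finrank_eq, hker]
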